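/- Let H be a finite set of pairwise disjoint half-open intervals [a,b) ⊂ ℝ. Let m₁, …, m_I be pairwise distinct interval-domain monomials, m_i(x) = x^{k_i}·χ_{I_i}(x), with each I_i ∈ H. Let g₁, …, g_J be Gaussian densities with pairwise distinct parameter pairs (μ_j, σ_j), and let e₁, …, e_K be exponential densities with pairwise distinct rates λ_k > 0. If real coefficients r₁,…,r_I, s₁,…,s_J, t₁,…,t_K satisfy Σ_{i=1}^I r_i m_i(x) + Σ_{j=1}^J s_j g_j(x) + Σ_{k=1}^K t_k e_k(x) = 0 for Lebesgue-almost every x ∈ ℝ, then all coefficients r_i, s_j, t_k are zero; i.e., the family {m_1, …, m_I, g_1, …, g_J, e_1, …, e_K} is linearly independent in L¹(ℝ). -/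

import Mathlib

open MeasureTheory

/-- The Gaussian density with mean `μ` and standard deviation `σ`. -/
noncomputable def gaussDensity (μ σ : ℝ) (x : ℝ) : ℝ :=
  (1 / (σ * Real.sqrt (2 * Real.pi))) * Real.exp (-((x - μ) ^ 2) / (2 * σ ^ 2))

/-- The exponential density with rate `l`. -/
noncomputable def expDensity (l : ℝ) (x : ℝ) : ℝ :=
  if 0 ≤ x then l * Real.exp (-(l * x)) else 0

/-- The interval-domain monomial `x ↦ x ^ k · χ_{[a,b)}(x)`. -/
noncomputable def intervalMonomial (k : ℕ) (a b : ℝ) (x : ℝ) : ℝ :=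
  if x ∈ Set.Ico a b then x ^ k else 0

open Filter

private lemma exp_lin_tendsto {B : ℝ} (C : ℝ) (hB : B < 0) :
    Tendsto (fun x : ℝ => Real.exp (B * x + C)) atTop (nhds 0) := by
  refine Real.tendsto_exp_atBot.comp ?_
  exact tendsto_atBot_add_const_right _ C (Tendsto.const_mul_atTop_of_neg hB tendsto_id)

private lemma exp_quad_tendsto {A : ℝ} (B C : ℝ) (hA : A < 0) :
    Tendsto (fun x : ℝ => Real.exp (A * x ^ 2 + B * x + C)) atTop (nhds 0) := by
  refine Real.tendsto_exp_atBot.comp ?_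
  have h1 : Tendsto (fun x : ℝ => x * (A * x + B) + C) atTop atBot := by
    refine tendsto_atBot_add_const_right _ C ?_
    exact Tendsto.atTop_mul_atBot₀ tendsto_id
      (tendsto_atBot_add_const_right _ B (Tendsto.const_mul_atTop_of_neg hA tendsto_id))
  exact h1.congr (fun x => by ring)

private lemma exp_poly_tendsto {A B : ℝ} (C : ℝ) (h : A < 0 ∨ (A = 0 ∧ B < 0)) :
    Tendsto (fun x : ℝ => Real.exp (A * x ^ 2 + B * x + C)) atTop (nhds 0) := by
  rcases h with hA | ⟨hA, hB⟩
  · exact exp_quad_tendsto B C hA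
  · simpa [hA] using exp_lin_tendsto C hB

private lemma gauss_exp_mul_tendsto (m sg c : ℝ) (hsg : 0 < sg) :
    Tendsto (fun x => Real.exp (c * x) * gaussDensity m sg x) atTop (nhds 0) := by
  have hne : sg ≠ 0 := ne_of_gt hsg
  have key : ∀ x : ℝ, Real.exp (c * x) * gaussDensity m sg x
      = (1 / (sg * Real.sqrt (2 * Real.pi))) *
        Real.exp ((-(1 / (2 * sg ^ 2))) * x ^ 2 + (c + m / sg ^ 2) * x
          + (-(m ^ 2 / (2 * sg ^ 2)))) := by
    intro x
    rw [gaussDensity, mul_left_comm, ← Real.exp_add]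
    congr 1
    field_simp
    ring
  have hA : (-(1 / (2 * sg ^ 2)) : ℝ) < 0 := neg_lt_zero.mpr (by positivity)
  have := (exp_quad_tendsto (c + m / sg ^ 2) (-(m ^ 2 / (2 * sg ^ 2))) hA).const_mul
    (1 / (sg * Real.sqrt (2 * Real.pi)))
  simpa [key] using this.congr (fun x => (key x).symm)

private lemma gauss_ratio_tendsto (m' s' m sg : ℝ) (hs' : 0 < s') (hsg : 0 < sg)
    (hcase : sg < s' ∨ (sg = s' ∧ m < m')) :
    Tendsto (fun x => Real.exp ((x - m') ^ 2 / (2 * s' ^ 2)) * gaussDensity m sg x)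
      atTop (nhds 0) := by
  have hne : sg ≠ 0 := ne_of_gt hsg
  have hne' : s' ≠ 0 := ne_of_gt hs'
  set A : ℝ := 1 / (2 * s' ^ 2) - 1 / (2 * sg ^ 2) with hA
  set B : ℝ := m / sg ^ 2 - m' / s' ^ 2 with hB
  set C : ℝ := m' ^ 2 / (2 * s' ^ 2) - m ^ 2 / (2 * sg ^ 2) with hC
  have key : ∀ x : ℝ, Real.exp ((x - m') ^ 2 / (2 * s' ^ 2)) * gaussDensity m sg x
      = (1 / (sg * Real.sqrt (2 * Real.pi))) * Real.exp (A * x ^ 2 + B * x + C) := by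
    intro x
    rw [gaussDensity, mul_left_comm, ← Real.exp_add, hA, hB, hC]
    congr 1
    field_simp
    ring
  have hcond : A < 0 ∨ (A = 0 ∧ B < 0) := by
    rcases hcase with hlt | ⟨heq, hm⟩
    · left
      have h2 : sg ^ 2 < s' ^ 2 := by nlinarith
      have : 1 / (2 * s' ^ 2) < 1 / (2 * sg ^ 2) := by
        apply one_div_lt_one_div_of_lt <;> nlinarith
      rw [hA]; linarith
    · right
      constructor
      · rw [hA, heq, sub_self]
      · rw [hB, heq]
        have : m / s' ^ 2 < m' / s' ^ 2 := by gcongr <;> positivity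
        linarith
  have := (exp_poly_tendsto C hcond).const_mul (1 / (sg * Real.sqrt (2 * Real.pi)))
  simpa using this.congr (fun x => (key x).symm)

private lemma exp_kill {K : ℕ} (lam : Fin K → ℝ) (hlam : ∀ l, 0 < lam l)
    (hedist : Function.Injective lam) (t : Fin K → ℝ)
    (G : ℝ → ℝ) (hG : ∀ c : ℝ, Tendsto (fun x => Real.exp (c * x) * G x) atTop (nhds 0))
    (L : Filter ℝ) [L.NeBot] (hle : L ≤ atTop) :
    ∀ S : Finset (Fin K),
      ((fun x => (∑ l ∈ S, t l * (lam l * Real.exp (-(lam l * x)))) + G x) =ᶠ[L] 0) →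
      ∀ l ∈ S, t l = 0 := by
  classical
  intro S
  induction S using Finset.strongInduction with
  | _ S ih =>
    intro h l0 hl0
    obtain ⟨lm, hlmS, hmin⟩ := Finset.exists_min_image S lam ⟨l0, hl0⟩
    have hzero : Tendsto (fun x => Real.exp (lam lm * x) *
        ((∑ l ∈ S, t l * (lam l * Real.exp (-(lam l * x)))) + G x)) L (nhds 0) := by
      have heq : (fun x => Real.exp (lam lm * x) *
          ((∑ l ∈ S, t l * (lam l * Real.exp (-(lam l * x)))) + G x)) =ᶠ[L] (fun _ => 0) := by
        filter_upwards [h] with x hx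
        have hx' : (∑ l ∈ S, t l * (lam l * Real.exp (-(lam l * x)))) + G x = 0 := hx
        rw [hx', mul_zero]
      exact tendsto_const_nhds.congr' heq.symm
    have hfun : ∀ x, (∑ l ∈ S, t l * lam l * Real.exp ((lam lm - lam l) * x))
        + Real.exp (lam lm * x) * G x
        = Real.exp (lam lm * x) *
          ((∑ l ∈ S, t l * (lam l * Real.exp (-(lam l * x)))) + G x) := by
      intro x
      rw [mul_add, Finset.mul_sum]
      congr 1
      refine Finset.sum_congr rfl (fun l _ => ?_)
      have e1 : Real.exp (lam lm * x) * Real.exp (-(lam l * x))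
          = Real.exp ((lam lm - lam l) * x) := by
        rw [← Real.exp_add]; congr 1; ring
      rw [← e1]; ring
    have hterm : ∀ l ∈ S, Tendsto (fun x => t l * lam l * Real.exp ((lam lm - lam l) * x))
        atTop (nhds (if l = lm then t l * lam l else 0)) := by
      intro l hl
      by_cases hleq : l = lm
      · subst hleq
        simp only [if_pos rfl, sub_self, zero_mul, Real.exp_zero, mul_one]
        exact tendsto_const_nhds
      · rw [if_neg hleq]
        have hlt : lam lm < lam l :=
          lt_of_le_of_ne (hmin l hl) (fun hc => hleq (hedist hc).symm)
        have hB : lam lm - lam l < 0 := by linarith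
        have := (exp_lin_tendsto 0 hB).const_mul (t l * lam l)
        simpa using this
    have hsum := tendsto_finset_sum S hterm
    have hlimT : Tendsto (fun x => Real.exp (lam lm * x) *
        ((∑ l ∈ S, t l * (lam l * Real.exp (-(lam l * x)))) + G x)) atTop
        (nhds (t lm * lam lm)) := by
      have := hsum.add (hG (lam lm))
      have hval : (∑ l ∈ S, if l = lm then t l * lam l else 0) + 0 = t lm * lam lm := by
        rw [Finset.sum_ite_eq' S lm (fun l => t l * lam l), if_pos hlmS, add_zero]
      rw [hval] at this
      exact this.congr hfun
    have h0 : t lm * lam lm = 0 :=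
      tendsto_nhds_unique (hlimT.mono_left hle) hzero
    have htlm : t lm = 0 :=
      (mul_eq_zero.mp h0).resolve_right (ne_of_gt (hlam lm))
    by_cases hl0m : l0 = lm
    · rw [hl0m]; exact htlm
    · have h' : (fun x => (∑ l ∈ S.erase lm, t l * (lam l * Real.exp (-(lam l * x)))) + G x)
          =ᶠ[L] 0 := by
        filter_upwards [h] with x hx
        have hx' : (∑ l ∈ S, t l * (lam l * Real.exp (-(lam l * x)))) + G x = 0 := hx
        have hsplit : (∑ l ∈ S, t l * (lam l * Real.exp (-(lam l * x))))
            = ∑ l ∈ S.erase lm, t l * (lam l * Real.exp (-(lam l * x))) := by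
          rw [← Finset.add_sum_erase S _ hlmS, htlm, zero_mul, zero_add]
        show (∑ l ∈ S.erase lm, t l * (lam l * Real.exp (-(lam l * x)))) + G x = 0
        rw [← hsplit]; exact hx'
      exact ih (S.erase lm) (Finset.erase_ssubset hlmS) h' l0
        (Finset.mem_erase.mpr ⟨hl0m, hl0⟩)

private lemma gauss_kill {J : ℕ} (μ σ : Fin J → ℝ) (hσ : ∀ j, 0 < σ j)
    (hgdist : Function.Injective (fun j => (μ j, σ j))) (s : Fin J → ℝ)
    (L : Filter ℝ) [L.NeBot] (hle : L ≤ atTop) :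
    ∀ S : Finset (Fin J),
      ((fun x => ∑ j ∈ S, s j * gaussDensity (μ j) (σ j) x) =ᶠ[L] 0) →
      ∀ j ∈ S, s j = 0 := by
  classical
  intro S
  induction S using Finset.strongInduction with
  | _ S ih =>
    intro h j0 hj0
    obtain ⟨j1, hj1S, hσmax⟩ := Finset.exists_max_image S σ ⟨j0, hj0⟩
    obtain ⟨jm, hjm', hμmax⟩ := Finset.exists_max_image
      (S.filter fun j => σ j = σ j1) μ ⟨j1, by simp [hj1S]⟩
    have hjmS : jm ∈ S := (Finset.mem_filter.mp hjm').1
    have hσjm : σ jm = σ j1 := (Finset.mem_filter.mp hjm').2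
    have hKpos : (0:ℝ) < 1 / (σ jm * Real.sqrt (2 * Real.pi)) := by
      have : (0:ℝ) < Real.sqrt (2 * Real.pi) :=
        Real.sqrt_pos.mpr (by positivity)
      exact one_div_pos.mpr (mul_pos (hσ jm) this)
    have hterm : ∀ j ∈ S, Tendsto
        (fun x => Real.exp ((x - μ jm) ^ 2 / (2 * (σ jm) ^ 2)) *
          (s j * gaussDensity (μ j) (σ j) x)) atTop
        (nhds (if j = jm then s jm * (1 / (σ jm * Real.sqrt (2 * Real.pi))) else 0)) := by
      intro j hj
      by_cases hjeq : j = jm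
      · subst hjeq
        rw [if_pos rfl]
        have hconst : ∀ x, Real.exp ((x - μ j) ^ 2 / (2 * (σ j) ^ 2)) *
            (s j * gaussDensity (μ j) (σ j) x)
            = s j * (1 / (σ j * Real.sqrt (2 * Real.pi))) := by
          intro x
          rw [gaussDensity]
          rw [show Real.exp ((x - μ j) ^ 2 / (2 * (σ j) ^ 2)) *
              (s j * (1 / (σ j * Real.sqrt (2 * Real.pi)) *
                Real.exp (-((x - μ j) ^ 2) / (2 * (σ j) ^ 2))))
              = s j * (1 / (σ j * Real.sqrt (2 * Real.pi))) *
                (Real.exp ((x - μ j) ^ 2 / (2 * (σ j) ^ 2)) *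
                 Real.exp (-((x - μ j) ^ 2) / (2 * (σ j) ^ 2))) from by ring,
            ← Real.exp_add]
          have he : (x - μ j) ^ 2 / (2 * (σ j) ^ 2) + -((x - μ j) ^ 2) / (2 * (σ j) ^ 2)
              = 0 := by ring
          rw [he, Real.exp_zero, mul_one]
        exact tendsto_const_nhds.congr (fun x => (hconst x).symm)
      · rw [if_neg hjeq]
        have hcase : σ j < σ jm ∨ (σ j = σ jm ∧ μ j < μ jm) := by
          have hle1 : σ j ≤ σ jm := hσjm ▸ hσmax j hj
          rcases lt_or_eq_of_le hle1 with hlt | heq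
          · exact Or.inl hlt
          · right
            refine ⟨heq, ?_⟩
            have hjf : j ∈ S.filter fun j => σ j = σ j1 :=
              Finset.mem_filter.mpr ⟨hj, heq.trans hσjm⟩
            rcases lt_or_eq_of_le (hμmax j hjf) with hlt | heq2
            · exact hlt
            · exact absurd (hgdist (show (μ j, σ j) = (μ jm, σ jm) by
                rw [heq2, heq])) hjeq
        have := (gauss_ratio_tendsto (μ jm) (σ jm) (μ j) (σ j) (hσ jm) (hσ j)
          hcase).const_mul (s j)
        simpa using this.congr (fun x => by ring)
    have hsum := tendsto_finset_sum S hterm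
    have hval : (∑ j ∈ S, if j = jm then s jm * (1 / (σ jm * Real.sqrt (2 * Real.pi)))
        else 0) = s jm * (1 / (σ jm * Real.sqrt (2 * Real.pi))) := by
      rw [Finset.sum_ite_eq' S jm, if_pos hjmS]
    rw [hval] at hsum
    have hlimT : Tendsto (fun x => Real.exp ((x - μ jm) ^ 2 / (2 * (σ jm) ^ 2)) *
        (∑ j ∈ S, s j * gaussDensity (μ j) (σ j) x)) atTop
        (nhds (s jm * (1 / (σ jm * Real.sqrt (2 * Real.pi))))) := by
      exact hsum.congr (fun x => by rw [Finset.mul_sum])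
    have hzero : Tendsto (fun x => Real.exp ((x - μ jm) ^ 2 / (2 * (σ jm) ^ 2)) *
        (∑ j ∈ S, s j * gaussDensity (μ j) (σ j) x)) L (nhds 0) := by
      have heq : (fun x => Real.exp ((x - μ jm) ^ 2 / (2 * (σ jm) ^ 2)) *
          (∑ j ∈ S, s j * gaussDensity (μ j) (σ j) x)) =ᶠ[L] (fun _ => 0) := by
        filter_upwards [h] with x hx
        have hx' : (∑ j ∈ S, s j * gaussDensity (μ j) (σ j) x) = 0 := hx
        rw [hx', mul_zero]
      exact tendsto_const_nhds.congr' heq.symm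
    have h0 : s jm * (1 / (σ jm * Real.sqrt (2 * Real.pi))) = 0 :=
      tendsto_nhds_unique (hlimT.mono_left hle) hzero
    have hsjm : s jm = 0 := (mul_eq_zero.mp h0).resolve_right (ne_of_gt hKpos)
    by_cases hj0m : j0 = jm
    · rw [hj0m]; exact hsjm
    · have h' : (fun x => ∑ j ∈ S.erase jm, s j * gaussDensity (μ j) (σ j) x) =ᶠ[L] 0 := by
        filter_upwards [h] with x hx
        have hx' : (∑ j ∈ S, s j * gaussDensity (μ j) (σ j) x) = 0 := hx
        show (∑ j ∈ S.erase jm, s j * gaussDensity (μ j) (σ j) x) = 0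
        rw [show (∑ j ∈ S.erase jm, s j * gaussDensity (μ j) (σ j) x)
            = ∑ j ∈ S, s j * gaussDensity (μ j) (σ j) x by
          rw [← Finset.add_sum_erase S _ hjmS, hsjm, zero_mul, zero_add]]
        exact hx'
      exact ih (S.erase jm) (Finset.erase_ssubset hjmS) h' j0
        (Finset.mem_erase.mpr ⟨hj0m, hj0⟩)

theorem stmt8 {I J K : ℕ}
    (k : Fin I → ℕ) (a b : Fin I → ℝ)
    (hab : ∀ i, a i < b i)
    -- the supports come from a family `H` of pairwise disjoint half-open intervals:
    (hH : ∀ i i', Set.Ico (a i) (b i) = Set.Ico (a i') (b i') ∨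
          Disjoint (Set.Ico (a i) (b i)) (Set.Ico (a i') (b i')))
    -- the interval-domain monomials are pairwise distinct:
    (hmdist : Function.Injective (fun i => (k i, a i, b i)))
    (μ σ : Fin J → ℝ) (hσ : ∀ j, 0 < σ j)
    -- the Gaussian densities have pairwise distinct parameter pairs:
    (hgdist : Function.Injective (fun j => (μ j, σ j)))
    (lam : Fin K → ℝ) (hlam : ∀ l, 0 < lam l)
    -- the exponential densities have pairwise distinct rates:
    (hedist : Function.Injective lam)
    (r : Fin I → ℝ) (s : Fin J → ℝ) (t : Fin K → ℝ)
    (h : ∀ᵐ x ∂(volume : Measure ℝ),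
        ∑ i, r i * intervalMonomial (k i) (a i) (b i) x
          + ∑ j, s j * gaussDensity (μ j) (σ j) x
          + ∑ l, t l * expDensity (lam l) x = 0) :
    (∀ i, r i = 0) ∧ (∀ j, s j = 0) ∧ (∀ l, t l = 0) := by
  classical
  set L : Filter ℝ := atTop ⊓ ae (volume : Measure ℝ) with hL
  have hLBot : L.NeBot := by
    rw [hL, Filter.inf_neBot_iff]
    intro p hp q hq
    obtain ⟨x0, hx0⟩ := Filter.mem_atTop_sets.mp hp
    have hq' : volume qᶜ = 0 := hq
    by_contra hcon
    rw [Set.not_nonempty_iff_eq_empty] at hcon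
    have hsub : Set.Ici x0 ⊆ qᶜ := by
      intro y hy hyq
      exact Set.eq_empty_iff_forall_notMem.mp hcon y ⟨hx0 y hy, hyq⟩
    have hm := measure_mono (μ := (volume : Measure ℝ)) hsub
    rw [hq', Real.volume_Ici] at hm
    simp at hm
  haveI := hLBot
  have hleL : L ≤ atTop := by rw [hL]; exact inf_le_left
  set M : ℝ := 1 + ∑ i, |b i| with hM
  have hM0 : 0 < M := by
    have : (0:ℝ) ≤ ∑ i, |b i| := Finset.sum_nonneg (fun i _ => abs_nonneg _)
    rw [hM]; linarith
  have hMb : ∀ i, b i ≤ M := by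
    intro i
    have h1 : |b i| ≤ ∑ i', |b i'| :=
      Finset.single_le_sum (fun i' _ => abs_nonneg (b i')) (Finset.mem_univ i)
    have h2 : b i ≤ |b i| := le_abs_self _
    rw [hM]; linarith
  -- along L, the monomials vanish and expDensity is the exponential
  have h1 : (fun x => (∑ l ∈ Finset.univ, t l * (lam l * Real.exp (-(lam l * x))))
      + (∑ j, s j * gaussDensity (μ j) (σ j) x)) =ᶠ[L] 0 := by
    filter_upwards [h.filter_mono (by rw [hL]; exact inf_le_right),
      (eventually_ge_atTop M).filter_mono hleL] with x hx hxM
    have hmon : ∑ i, r i * intervalMonomial (k i) (a i) (b i) x = 0 := by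
      refine Finset.sum_eq_zero (fun i _ => ?_)
      rw [intervalMonomial, if_neg, mul_zero]
      exact fun hmem => absurd hmem.2 (not_lt.mpr (le_trans (hMb i) hxM))
    have hexp : ∑ l, t l * expDensity (lam l) x
        = ∑ l ∈ Finset.univ, t l * (lam l * Real.exp (-(lam l * x))) := by
      refine Finset.sum_congr rfl (fun l _ => ?_)
      rw [expDensity, if_pos (le_trans (le_of_lt hM0) hxM)]
    show (∑ l ∈ Finset.univ, t l * (lam l * Real.exp (-(lam l * x))))
        + (∑ j, s j * gaussDensity (μ j) (σ j) x) = 0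
    rw [← hexp]
    rw [hmon, zero_add] at hx
    linarith
  -- kill exponentials
  have hG : ∀ c : ℝ, Tendsto (fun x => Real.exp (c * x) *
      (∑ j, s j * gaussDensity (μ j) (σ j) x)) atTop (nhds 0) := by
    intro c
    have hterm : ∀ j ∈ (Finset.univ : Finset (Fin J)),
        Tendsto (fun x => Real.exp (c * x) * (s j * gaussDensity (μ j) (σ j) x))
          atTop (nhds 0) := by
      intro j _
      have := (gauss_exp_mul_tendsto (μ j) (σ j) c (hσ j)).const_mul (s j)
      simpa using this.congr (fun x => by ring)
    have hsum := tendsto_finset_sum Finset.univ hterm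
    rw [Finset.sum_const_zero] at hsum
    exact hsum.congr (fun x => by rw [Finset.mul_sum])
  have ht : ∀ l, t l = 0 := fun l =>
    exp_kill lam hlam hedist t _ hG L hleL Finset.univ h1 l (Finset.mem_univ l)
  -- kill gaussians
  have h2 : (fun x => ∑ j ∈ Finset.univ, s j * gaussDensity (μ j) (σ j) x) =ᶠ[L] 0 := by
    filter_upwards [h1] with x hx
    have hx' : (∑ l ∈ Finset.univ, t l * (lam l * Real.exp (-(lam l * x))))
        + (∑ j, s j * gaussDensity (μ j) (σ j) x) = 0 := hx
    have he0 : (∑ l ∈ Finset.univ, t l * (lam l * Real.exp (-(lam l * x)))) = 0 :=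
      Finset.sum_eq_zero (fun l _ => by rw [ht l, zero_mul])
    show (∑ j ∈ Finset.univ, s j * gaussDensity (μ j) (σ j) x) = 0
    rw [he0, zero_add] at hx'
    exact hx'
  have hs : ∀ j, s j = 0 := fun j =>
    gauss_kill μ σ hσ hgdist s L hleL Finset.univ h2 j (Finset.mem_univ j)
  -- monomials
  have h3 : ∀ᵐ x ∂(volume : Measure ℝ),
      ∑ i, r i * intervalMonomial (k i) (a i) (b i) x = 0 := by
    filter_upwards [h] with x hx
    have hg0 : (∑ j, s j * gaussDensity (μ j) (σ j) x) = 0 :=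
      Finset.sum_eq_zero (fun j _ => by rw [hs j, zero_mul])
    have he0 : (∑ l, t l * expDensity (lam l) x) = 0 :=
      Finset.sum_eq_zero (fun l _ => by rw [ht l, zero_mul])
    rw [hg0, he0] at hx
    linarith
  have hr : ∀ i, r i = 0 := by
    intro i0
    set T := Finset.univ.filter
      (fun i => Set.Ico (a i) (b i) = Set.Ico (a i0) (b i0)) with hT
    set p : Polynomial ℝ := ∑ i ∈ T, Polynomial.C (r i) * Polynomial.X ^ (k i) with hp
    set N := {x : ℝ | ¬ ∑ i, r i * intervalMonomial (k i) (a i) (b i) x = 0} with hN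
    have hNull : volume N = 0 := ae_iff.mp h3
    have hroot : (Set.Ioo (a i0) (b i0) \ N) ⊆ {x | p.IsRoot x} := by
      intro x hx
      obtain ⟨hxI, hxN⟩ := hx
      have hsum : ∑ i, r i * intervalMonomial (k i) (a i) (b i) x = 0 := by
        by_contra hc; exact hxN hc
      have hx0 : x ∈ Set.Ico (a i0) (b i0) := ⟨le_of_lt hxI.1, hxI.2⟩
      have hstep1 : (∑ i ∈ T, r i * intervalMonomial (k i) (a i) (b i) x)
          = ∑ i ∈ Finset.univ, r i * intervalMonomial (k i) (a i) (b i) x := by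
        refine Finset.sum_subset (Finset.subset_univ T) (fun i _ hiT => ?_)
        have hne : Set.Ico (a i) (b i) ≠ Set.Ico (a i0) (b i0) := by
          intro hc; exact hiT (Finset.mem_filter.mpr ⟨Finset.mem_univ i, hc⟩)
        have hdisj := (hH i i0).resolve_left hne
        have hxnot : x ∉ Set.Ico (a i) (b i) := Set.disjoint_right.mp hdisj hx0
        rw [intervalMonomial, if_neg hxnot, mul_zero]
      have hstep2 : (∑ i ∈ T, r i * intervalMonomial (k i) (a i) (b i) x)
          = ∑ i ∈ T, r i * x ^ (k i) := by
        refine Finset.sum_congr rfl (fun i hiT => ?_)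
        have hIeq : Set.Ico (a i) (b i) = Set.Ico (a i0) (b i0) :=
          (Finset.mem_filter.mp hiT).2
        have : x ∈ Set.Ico (a i) (b i) := hIeq ▸ hx0
        rw [intervalMonomial, if_pos this]
      show p.IsRoot x
      rw [Polynomial.IsRoot, hp, Polynomial.eval_finset_sum]
      simp only [Polynomial.eval_mul, Polynomial.eval_C, Polynomial.eval_pow,
        Polynomial.eval_X]
      rw [← hstep2, hstep1]
      exact hsum
    have hIoo : volume (Set.Ioo (a i0) (b i0) \ N) = volume (Set.Ioo (a i0) (b i0)) :=
      measure_diff_null hNull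
    have hpos : volume (Set.Ioo (a i0) (b i0) \ N) ≠ 0 := by
      rw [hIoo, Real.volume_Ioo]
      simp only [ne_eq, ENNReal.ofReal_eq_zero, not_le]
      linarith [hab i0]
    have hinf : (Set.Ioo (a i0) (b i0) \ N).Infinite := by
      intro hfin
      exact hpos (hfin.measure_zero _)
    have hp0 : p = 0 := Polynomial.eq_zero_of_infinite_isRoot p (hinf.mono hroot)
    have hcoeff : p.coeff (k i0) = r i0 := by
      rw [hp, Polynomial.finset_sum_coeff]
      rw [Finset.sum_eq_single i0]
      · simp [Polynomial.coeff_C_mul, Polynomial.coeff_X_pow]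
      · intro i hiT hine
        have hkne : k i ≠ k i0 := by
          intro hk
          have hico := (Finset.mem_filter.mp hiT).2
          have hab' := (Set.Ico_eq_Ico_iff (Or.inl (hab i))).mp hico
          exact hine (hmdist (show (k i, a i, b i) = (k i0, a i0, b i0) by
            rw [hk, hab'.1, hab'.2]))
        simp [Polynomial.coeff_C_mul, Polynomial.coeff_X_pow, if_neg (Ne.symm hkne)]
      · intro hi0
        exact absurd (show i0 ∈ T from Finset.mem_filter.mpr ⟨Finset.mem_univ i0, rfl⟩) hi0
    rw [hp0] at hcoeff
    simpa using hcoeff.symm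
  exact ⟨hr, hs, ht⟩
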